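/- With the unique elements ζₙ from the Zassenhaus factorization 1 + Σₙ xₙ = ⋯exp(ζ₂)exp(ζ₁) in the completed free graded ℚ-algebra on generators xₙ of degree n, one has for every n ≥ 1: xₙ = Σ_{λ ⊢ n} (1/m_λ) · ζ_{λ₁} ζ_{λ₂} ⋯ ζ_{λ_r}, where the sum is over all partitions λ = (λ₁ ≥ λ₂ ≥ ⋯ ≥ λ_r) of n, and m_λ = ∏_{i≥1} m_i(λ)! with m_i(λ) the multiplicity of i in λ. -/

import Mathlib

/- Same model as for the Zassenhaus factorization: the completion of the free
graded ℚ-algebra on generators `xₙ` of degree `n` is encoded as power series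
over `FreeAlgebra ℚ ℕ`, with the variable `t` recording the degree. -/

/-- The formal exponential `exp (c · tᵏ) = ∑ⱼ cʲ tᵏʲ / j!` (for `k ≥ 1`). -/
noncomputable def expPow {R : Type*} [Ring R] [Algebra ℚ R] (k : ℕ) (c : R) :
    PowerSeries R :=
  PowerSeries.mk fun m =>
    if k ∣ m then (algebraMap ℚ R (((m / k).factorial : ℚ)⁻¹)) * c ^ (m / k) else 0

/-- Ordered partial product `exp(ζ_N t^N) ⋯ exp(ζ₂ t²) exp(ζ₁ t)`. -/
noncomputable def zassDown {R : Type*} [Ring R] [Algebra ℚ R] (ζ : ℕ → R) (N : ℕ) :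
    PowerSeries R :=
  (((List.range N).reverse).map (fun k => expPow (k + 1) (ζ (k + 1)))).prod

/-- The series `1 + ∑_{n ≥ 1} xₙ tⁿ` over the free algebra on the `xₙ`. -/
noncomputable def genSeries : PowerSeries (FreeAlgebra ℚ ℕ) :=
  PowerSeries.mk fun n => if n = 0 then 1 else FreeAlgebra.ι ℚ n

/-- `m_λ = ∏ᵢ mᵢ(λ)!` where `mᵢ(λ)` is the multiplicity of `i` in `λ`. -/
def mPart {n : ℕ} (lam : Nat.Partition n) : ℕ :=
  ∏ i ∈ lam.parts.toFinset, (lam.parts.count i).factorial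

/-- The product `ζ_{λ₁} ζ_{λ₂} ⋯ ζ_{λ_r}` with parts in weakly decreasing order. -/
noncomputable def zetaProd {n : ℕ} (ζ : ℕ → FreeAlgebra ℚ ℕ) (lam : Nat.Partition n) :
    FreeAlgebra ℚ ℕ :=
  (((lam.parts.sort (· ≤ ·)).reverse).map ζ).prod

section Aux

open Finset PowerSeries

/-- Partitions of `n` with all parts at most `N`. -/
def Pset (n N : ℕ) : Finset (Nat.Partition n) :=
  Finset.univ.filter fun lam => ∀ p ∈ lam.parts, p ≤ N

lemma zassDown_zero (ζ : ℕ → FreeAlgebra ℚ ℕ) : zassDown ζ 0 = 1 := by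
  simp [zassDown]

lemma zassDown_succ (ζ : ℕ → FreeAlgebra ℚ ℕ) (N : ℕ) :
    zassDown ζ (N + 1) = expPow (N + 1) (ζ (N + 1)) * zassDown ζ N := by
  simp [zassDown, List.range_succ]

/-- Build a partition of `n` from `j` parts equal to `k` and a partition of `n - k*j`. -/
def buildLam (n k j : ℕ) (hk : 0 < k) (hj : k * j ≤ n) (μ : Nat.Partition (n - k * j)) :
    Nat.Partition n where
  parts := Multiset.replicate j k + μ.parts
  parts_pos := by
    intro p hp
    rcases Multiset.mem_add.1 hp with h | h
    · rw [Multiset.eq_of_mem_replicate h]; exact hk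
    · exact μ.parts_pos h
  parts_sum := by
    rw [Multiset.sum_add, Multiset.sum_replicate, μ.parts_sum, smul_eq_mul, mul_comm]
    omega

lemma buildLam_parts (n k j : ℕ) (hk : 0 < k) (hj : k * j ≤ n) (μ : Nat.Partition (n - k * j)) :
    (buildLam n k j hk hj μ).parts = Multiset.replicate j k + μ.parts := rfl

lemma count_buildLam (n k j : ℕ) (hk : 0 < k) (hj : k * j ≤ n) (μ : Nat.Partition (n - k * j))
    (hμ : k ∉ μ.parts) : (buildLam n k j hk hj μ).parts.count k = j := by
  rw [buildLam_parts, Multiset.count_add, Multiset.count_replicate, if_pos rfl,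
    Multiset.count_eq_zero_of_notMem hμ]
  omega

lemma filter_buildLam (n k j : ℕ) (hk : 0 < k) (hj : k * j ≤ n) (μ : Nat.Partition (n - k * j))
    (hμ : k ∉ μ.parts) : (buildLam n k j hk hj μ).parts.filter (· ≠ k) = μ.parts := by
  rw [buildLam_parts, Multiset.filter_add]
  have h1 : (Multiset.replicate j k).filter (· ≠ k) = 0 := by
    rw [Multiset.filter_eq_nil]
    intro a ha
    simp [Multiset.eq_of_mem_replicate ha]
  have h2 : μ.parts.filter (· ≠ k) = μ.parts := by
    rw [Multiset.filter_eq_self]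
    intro a ha h
    exact hμ (h ▸ ha)
  rw [h1, h2, zero_add]

lemma mPart_buildLam (n k j : ℕ) (hk : 0 < k) (hj : k * j ≤ n) (μ : Nat.Partition (n - k * j))
    (hμ : k ∉ μ.parts) : mPart (buildLam n k j hk hj μ) = j.factorial * mPart μ := by
  rcases Nat.eq_zero_or_pos j with rfl | hjpos
  · have : (buildLam n k 0 hk hj μ).parts = μ.parts := by
      rw [buildLam_parts]; simp
    unfold mPart
    rw [this]; simp
  · have hparts : (buildLam n k j hk hj μ).parts = Multiset.replicate j k + μ.parts :=
      buildLam_parts ..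
    unfold mPart
    rw [hparts]
    have htf : (Multiset.replicate j k + μ.parts).toFinset = insert k μ.parts.toFinset := by
      rw [Multiset.toFinset_add, Multiset.toFinset_replicate, if_neg (by omega)]
      rw [Finset.insert_eq]
    rw [htf, Finset.prod_insert (by simp [hμ])]
    congr 1
    · rw [Multiset.count_add, Multiset.count_replicate, if_pos rfl,
        Multiset.count_eq_zero_of_notMem hμ]
      simp
    · apply Finset.prod_congr rfl
      intro i hi
      have hik : i ≠ k := by
        intro h; subst h; exact hμ (Multiset.mem_toFinset.1 hi)
      rw [Multiset.count_add, Multiset.count_replicate, if_neg (Ne.symm hik), zero_add]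

lemma sort_buildLam (n k j : ℕ) (hk : 0 < k) (hj : k * j ≤ n) (μ : Nat.Partition (n - k * j))
    (hμ : ∀ p ∈ μ.parts, p ≤ k) :
    (buildLam n k j hk hj μ).parts.sort (· ≤ ·) =
      μ.parts.sort (· ≤ ·) ++ List.replicate j k := by
  refine List.Perm.eq_of_pairwise' (r := (· ≤ ·)) ?_ ?_ ?_
  rotate_right
  · rw [← Multiset.coe_eq_coe, Multiset.sort_eq, ← Multiset.coe_add, Multiset.sort_eq,
      Multiset.coe_replicate, buildLam_parts, add_comm]
  · exact Multiset.pairwise_sort _ _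
  · rw [List.pairwise_append]
    refine ⟨Multiset.pairwise_sort _ _, List.pairwise_replicate.2 (Or.inr le_rfl), ?_⟩
    intro a ha b hb
    rw [List.eq_of_mem_replicate hb]
    exact hμ a ((Multiset.mem_sort _).1 ha)

lemma zetaProd_buildLam (ζ : ℕ → FreeAlgebra ℚ ℕ) (n k j : ℕ) (hk : 0 < k) (hj : k * j ≤ n)
    (μ : Nat.Partition (n - k * j)) (hμ : ∀ p ∈ μ.parts, p ≤ k) :
    zetaProd ζ (buildLam n k j hk hj μ) = ζ k ^ j * zetaProd ζ μ := by
  unfold zetaProd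
  rw [sort_buildLam n k j hk hj μ hμ, List.reverse_append, List.reverse_replicate,
    List.map_append, List.prod_append, List.map_replicate, List.prod_replicate]

lemma coeff_zassDown (ζ : ℕ → FreeAlgebra ℚ ℕ) :
    ∀ N n : ℕ, PowerSeries.coeff n (zassDown ζ N) =
      ∑ lam ∈ Pset n N,
        algebraMap ℚ (FreeAlgebra ℚ ℕ) ((mPart lam : ℚ)⁻¹) * zetaProd ζ lam := by
  intro N
  induction N with
  | zero =>
    intro n
    rw [zassDown_zero, PowerSeries.coeff_one]
    rcases Nat.eq_zero_or_pos n with rfl | hn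
    · have : Pset 0 0 = {default} := by
        apply Finset.eq_singleton_iff_unique_mem.2
        constructor
        · simp [Pset]
        · intro x _; exact Subsingleton.elim x default
      rw [this, Finset.sum_singleton]
      have hparts : (default : Nat.Partition 0).parts = 0 := Nat.Partition.partition_zero_parts _
      simp [mPart, zetaProd, hparts]
    · have : Pset n 0 = ∅ := by
        apply Finset.eq_empty_iff_forall_notMem.2
        intro lam hlam
        have h := (Finset.mem_filter.1 hlam).2
        have hne : lam.parts ≠ 0 := by
          intro h0
          have := lam.parts_sum
          rw [h0] at this
          simp at this
          omega
        obtain ⟨p, hp⟩ := Multiset.exists_mem_of_ne_zero hne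
        have := lam.parts_pos hp
        have := h p hp
        omega
      rw [this, Finset.sum_empty, if_neg (by omega)]
  | succ N IH =>
    intro n
    set k := N + 1 with hkdef
    have hk : 0 < k := Nat.succ_pos N
    set c := ζ k with hcdef
    rw [zassDown_succ, PowerSeries.coeff_mul]
    have hstep1 : ∑ p ∈ Finset.HasAntidiagonal.antidiagonal n,
        PowerSeries.coeff p.1 (expPow k c) * PowerSeries.coeff p.2 (zassDown ζ N) =
        ∑ p ∈ (Finset.HasAntidiagonal.antidiagonal n).filter (fun p => k ∣ p.1),
          PowerSeries.coeff p.1 (expPow k c) * PowerSeries.coeff p.2 (zassDown ζ N) := by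
      symm
      apply Finset.sum_subset (Finset.filter_subset _ _)
      intro p hp hp'
      have hndvd : ¬ k ∣ p.1 := by
        intro h; exact hp' (Finset.mem_filter.2 ⟨hp, h⟩)
      rw [expPow, PowerSeries.coeff_mk, if_neg hndvd, zero_mul]
    rw [hstep1]
    have hstep2 : ∑ p ∈ (Finset.HasAntidiagonal.antidiagonal n).filter (fun p => k ∣ p.1),
          PowerSeries.coeff p.1 (expPow k c) * PowerSeries.coeff p.2 (zassDown ζ N) =
        ∑ j ∈ Finset.range (n / k + 1),
          (algebraMap ℚ (FreeAlgebra ℚ ℕ) ((j.factorial : ℚ)⁻¹) * c ^ j) *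
            PowerSeries.coeff (n - k * j) (zassDown ζ N) := by
      apply Finset.sum_nbij' (i := fun p => p.1 / k) (j := fun j => (k * j, n - k * j))
      · intro p hp
        obtain ⟨hp1, _⟩ := Finset.mem_filter.1 hp
        have : p.1 + p.2 = n := Finset.HasAntidiagonal.mem_antidiagonal.1 hp1
        have : p.1 ≤ n := by omega
        rw [Finset.mem_range]
        have := Nat.div_le_div_right (c := k) this
        omega
      · intro j hj
        rw [Finset.mem_range] at hj
        have hjn : k * j ≤ n := by
          calc k * j ≤ k * (n / k) := Nat.mul_le_mul_left k (by omega)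
          _ ≤ n := Nat.mul_div_le n k
        refine Finset.mem_filter.2 ⟨Finset.HasAntidiagonal.mem_antidiagonal.2 (by omega), ⟨j, rfl⟩⟩
      · intro p hp
        obtain ⟨hp1, hdvd⟩ := Finset.mem_filter.1 hp
        have hsum : p.1 + p.2 = n := Finset.HasAntidiagonal.mem_antidiagonal.1 hp1
        have h1 : k * (p.1 / k) = p.1 := Nat.mul_div_cancel' hdvd
        ext
        · exact h1
        · simp only; omega
      · intro j hj
        simp only
        exact Nat.mul_div_cancel_left j hk
      · intro p hp
        obtain ⟨hp1, hdvd⟩ := Finset.mem_filter.1 hp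
        have hsum : p.1 + p.2 = n := Finset.HasAntidiagonal.mem_antidiagonal.1 hp1
        rw [expPow, PowerSeries.coeff_mk, if_pos hdvd]
        have h1 : k * (p.1 / k) = p.1 := Nat.mul_div_cancel' hdvd
        have h2 : n - k * (p.1 / k) = p.2 := by omega
        rw [h1, show n - p.1 = p.2 from by omega]
    rw [hstep2]
    simp_rw [IH, Finset.mul_sum]
    rw [Finset.sum_sigma']
    apply Finset.sum_bij (i := fun a ha =>
      buildLam n k a.1 hk (by
        have := (Finset.mem_sigma.1 ha).1
        rw [Finset.mem_range] at this
        calc k * a.1 ≤ k * (n / k) := Nat.mul_le_mul_left k (by omega)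
        _ ≤ n := Nat.mul_div_le n k) a.2)
    · -- maps into Pset n (N+1)
      intro a ha
      refine Finset.mem_filter.2 ⟨Finset.mem_univ _, ?_⟩
      intro p hp
      rw [buildLam_parts] at hp
      rcases Multiset.mem_add.1 hp with h | h
      · rw [Multiset.eq_of_mem_replicate h]
      · have := (Finset.mem_filter.1 (Finset.mem_sigma.1 ha).2).2 p h
        omega
    · -- injective
      intro a ha b hb hab
      have hμa := (Finset.mem_filter.1 (Finset.mem_sigma.1 ha).2).2
      have hμb := (Finset.mem_filter.1 (Finset.mem_sigma.1 hb).2).2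
      have hka : k ∉ a.2.parts := fun h => by have := hμa k h; omega
      have hkb : k ∉ b.2.parts := fun h => by have := hμb k h; omega
      have hparts := congrArg Nat.Partition.parts hab
      rw [buildLam_parts, buildLam_parts] at hparts
      have hcount : a.1 = b.1 := by
        have := congrArg (Multiset.count k) hparts
        rwa [Multiset.count_add, Multiset.count_add, Multiset.count_replicate, if_pos rfl,
          Multiset.count_replicate, if_pos rfl, Multiset.count_eq_zero_of_notMem hka,
          Multiset.count_eq_zero_of_notMem hkb] at this
      obtain ⟨j₁, μ₁⟩ := a
      obtain ⟨j₂, μ₂⟩ := b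
      simp only at hcount
      subst hcount
      simp only [Sigma.mk.inj_iff, heq_eq_eq, true_and]
      have : μ₁.parts = μ₂.parts := by
        have := hparts
        rwa [add_right_inj] at this
      exact Nat.Partition.ext this
    · -- surjective
      intro lam hlam
      have hle := (Finset.mem_filter.1 hlam).2
      set j := lam.parts.count k with hjdef
      have hsplit : Multiset.replicate j k + lam.parts.filter (· ≠ k) = lam.parts := by
        conv_rhs => rw [← Multiset.filter_add_not (· = k) lam.parts]
        congr 1
        rw [Multiset.filter_eq' lam.parts k]
      have hsumsplit : k * j + (lam.parts.filter (· ≠ k)).sum = n := by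
        have := congrArg Multiset.sum hsplit
        rw [Multiset.sum_add, Multiset.sum_replicate, smul_eq_mul, lam.parts_sum] at this
        rw [mul_comm]; exact this
      have hjn : k * j ≤ n := by omega
      have hjlt : j < n / k + 1 := by
        have := Nat.div_le_div_right (c := k) hjn
        rw [Nat.mul_div_cancel_left j hk] at this
        omega
      refine ⟨⟨j, ⟨lam.parts.filter (· ≠ k), ?_, ?_⟩⟩, ?_, ?_⟩
      · intro p hp
        exact lam.parts_pos (Multiset.mem_filter.1 hp).1
      · omega
      · refine Finset.mem_sigma.2 ⟨Finset.mem_range.2 hjlt, ?_⟩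
        refine Finset.mem_filter.2 ⟨Finset.mem_univ _, ?_⟩
        intro p hp
        obtain ⟨hp1, hp2⟩ := Multiset.mem_filter.1 hp
        have := hle p hp1
        omega
      · apply Nat.Partition.ext
        rw [buildLam_parts]
        exact hsplit
    · -- values agree
      intro a ha
      obtain ⟨hj, hμ⟩ := Finset.mem_sigma.1 ha
      have hμle := (Finset.mem_filter.1 hμ).2
      have hka : k ∉ a.2.parts := fun h => by have := hμle k h; omega
      have hjn : k * a.1 ≤ n := by
        rw [Finset.mem_range] at hj
        calc k * a.1 ≤ k * (n / k) := Nat.mul_le_mul_left k (by omega)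
        _ ≤ n := Nat.mul_div_le n k
      rw [mPart_buildLam n k a.1 hk hjn a.2 hka,
        zetaProd_buildLam ζ n k a.1 hk hjn a.2 (fun p hp => by have := hμle p hp; omega)]
      rw [Nat.cast_mul, mul_inv, map_mul]
      rw [mul_assoc, mul_assoc]
      congr 1
      rw [← mul_assoc, ← mul_assoc, Algebra.commutes ((mPart a.2 : ℚ)⁻¹) (c ^ a.1)]

end Aux

/-- If `(ζₙ)` is the Zassenhaus factorization of `1 + ∑ₙ xₙ`, then
`xₙ = ∑_{λ ⊢ n} (1/m_λ) ζ_{λ₁} ⋯ ζ_{λ_r}`. -/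
theorem stmt_2 (ζ : ℕ → FreeAlgebra ℚ ℕ) (hζ0 : ζ 0 = 0)
    (hfact : ∀ n N : ℕ, n ≤ N →
      PowerSeries.coeff n (zassDown ζ N) = PowerSeries.coeff n genSeries)
    (n : ℕ) (hn : 1 ≤ n) :
    FreeAlgebra.ι ℚ n =
      ∑ lam : Nat.Partition n,
        algebraMap ℚ (FreeAlgebra ℚ ℕ) ((mPart lam : ℚ)⁻¹) * zetaProd ζ lam := by
  have h := hfact n n le_rfl
  rw [coeff_zassDown] at h
  have hgen : PowerSeries.coeff n genSeries = FreeAlgebra.ι ℚ n := by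
    rw [genSeries, PowerSeries.coeff_mk, if_neg (by omega)]
  rw [hgen] at h
  have hP : Pset n n = Finset.univ := by
    apply Finset.filter_true_of_mem
    intro lam _ p hp
    calc p ≤ lam.parts.sum := Multiset.le_sum_of_mem hp
    _ = n := lam.parts_sum
  rw [hP] at h
  exact h.symm
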